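/- Let S be a finite subset of the positive integers, let w be a permutation of S, and let v = v_1 v_2 ⋯ v_k be the canonical block decomposition of the class ⟨w⟩ (each v_i an increasing or decreasing run of consecutive integers such that every u ∼ w decomposes into blocks equivalent to the v_i). If m_i is the length of block v_i, then #⟨w⟩ = F_{m_1 + 1} · F_{m_2 + 1} ⋯ F_{m_k + 1}, a product of Fibonacci numbers. -/

import Mathlib

/-- One interchange of two adjacent entries of a word whose values differ by exactly 1. -/
def AdjSwap1 (u v : List ℕ) : Prop :=
  ∃ (p q : List ℕ) (x y : ℕ), ((x : ℤ) - (y : ℤ)).natAbs = 1 ∧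
    u = p ++ x :: y :: q ∧ v = p ++ y :: x :: q

/-- A (nonempty) block which is an increasing or decreasing sequence of
consecutive integers. -/
def ConsecRun (l : List ℕ) : Prop :=
  l ≠ [] ∧ (l.Chain' (fun a b => b = a + 1) ∨ l.Chain' (fun a b => a = b + 1))

/-- `Decomposes v w` says: every `u ∼ w` has the form `u = v'₁ v'₂ ⋯ v'ₖ` where
`v'ᵢ ∼ vᵢ`. -/
def Decomposes (v : List (List ℕ)) (w : List ℕ) : Prop :=
  ∀ u : List ℕ, Relation.EqvGen AdjSwap1 w u →
    ∃ v' : List (List ℕ), u = v'.flatten ∧ v'.length = v.length ∧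
      ∀ (idx : ℕ) (h1 : idx < v.length) (h2 : idx < v'.length),
        Relation.EqvGen AdjSwap1 (v.get ⟨idx, h1⟩) (v'.get ⟨idx, h2⟩)

open Relation List

local notation "Eqv" => Relation.EqvGen AdjSwap1

lemma adjswap1_symm {u v : List ℕ} (h : AdjSwap1 u v) : AdjSwap1 v u := by
  obtain ⟨p, q, x, y, hxy, hu, hv⟩ := h
  exact ⟨p, q, y, x, by omega, hv, hu⟩

lemma adjswap1_length {u v : List ℕ} (h : AdjSwap1 u v) : u.length = v.length := by
  obtain ⟨p, q, x, y, hxy, hu, hv⟩ := h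
  simp [hu, hv]

lemma eqv_length {u v : List ℕ} (h : Eqv u v) : u.length = v.length := by
  induction h with
  | rel _ _ h => exact adjswap1_length h
  | refl => rfl
  | symm _ _ _ ih => exact ih.symm
  | trans _ _ _ _ _ ih1 ih2 => exact ih1.trans ih2

lemma adjswap1_append {u u' : List ℕ} (p q : List ℕ) (h : AdjSwap1 u u') :
    AdjSwap1 (p ++ u ++ q) (p ++ u' ++ q) := by
  obtain ⟨p', q', x, y, hxy, hu, hu'⟩ := h
  exact ⟨p ++ p', q' ++ q, x, y, hxy, by simp [hu], by simp [hu']⟩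

lemma eqv_append {u u' : List ℕ} (p q : List ℕ) (h : Eqv u u') :
    Eqv (p ++ u ++ q) (p ++ u' ++ q) := by
  induction h with
  | rel _ _ h => exact EqvGen.rel _ _ (adjswap1_append p q h)
  | refl => exact EqvGen.refl _
  | symm _ _ _ ih => exact EqvGen.symm _ _ ih
  | trans _ _ _ _ _ ih1 ih2 => exact EqvGen.trans _ _ _ ih1 ih2

lemma eqv_cons (x : ℕ) {u u' : List ℕ} (h : Eqv u u') : Eqv (x :: u) (x :: u') := by
  have := eqv_append [x] [] h
  simpa using this

lemma eqv_flatten {v L : List (List ℕ)} (h : List.Forall₂ (Relation.EqvGen AdjSwap1) v L) :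
    Eqv v.flatten L.flatten := by
  induction h with
  | nil => exact EqvGen.refl _
  | @cons b x v' L' hb _ ih =>
    simp only [List.flatten_cons]
    have h1 : Eqv (b ++ v'.flatten) (x ++ v'.flatten) := by
      simpa using eqv_append [] v'.flatten hb
    have h2 : Eqv (x ++ v'.flatten) (x ++ L'.flatten) := by
      simpa using eqv_append x [] ih
    exact EqvGen.trans _ _ _ h1 h2

/-- The "tilings by monominoes and dominoes" words starting from value `a`. -/
inductive FibW : ℕ → List ℕ → Prop
  | nil (a : ℕ) : FibW a []
  | one (a : ℕ) (l : List ℕ) : FibW (a + 1) l → FibW a (a :: l)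
  | two (a : ℕ) (l : List ℕ) : FibW (a + 2) l → FibW a ((a + 1) :: a :: l)

lemma fibW_head {a z : ℕ} {l : List ℕ} (h : FibW a (z :: l)) : z = a ∨ z = a + 1 := by
  cases h with
  | one => exact Or.inl rfl
  | two => exact Or.inr rfl

lemma fibW_run (m a : ℕ) : FibW a (List.range' a m) := by
  induction m generalizing a with
  | zero => exact FibW.nil a
  | succ n ih =>
    rw [List.range'_succ]
    exact FibW.one a _ (ih (a + 1))

lemma fibW_eqv_run {a : ℕ} {u : List ℕ} (h : FibW a u) :
    Eqv (List.range' a u.length) u := by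
  induction h with
  | nil => exact EqvGen.refl _
  | one a l _ ih =>
    rw [List.length_cons, List.range'_succ]
    exact eqv_cons a ih
  | two a l _ ih =>
    have hlen : ((a+1) :: a :: l).length = l.length + 2 := by simp
    rw [hlen, List.range'_succ, List.range'_succ]
    have h1 : AdjSwap1 (a :: (a+1) :: List.range' (a+2) l.length)
        ((a+1) :: a :: List.range' (a+2) l.length) :=
      ⟨[], List.range' (a+2) l.length, a, a+1, by omega, rfl, rfl⟩
    refine EqvGen.trans _ _ _ (EqvGen.rel _ _ h1) ?_
    have := eqv_append [a+1, a] [] ih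
    simpa using this

lemma fibW_tail {a : ℕ} {l : List ℕ} (h : FibW a (a :: l)) : FibW (a + 1) l := by
  generalize hu : a :: l = u at h
  cases h with
  | nil => simp at hu
  | one _ l' h' =>
    obtain rfl : l = l' := by simpa using hu
    exact h'
  | two _ l' h' =>
    simp only [List.cons.injEq] at hu
    omega

lemma fibW_swap {a : ℕ} {u u' : List ℕ} (h : FibW a u) (hs : AdjSwap1 u u') : FibW a u' := by
  induction h generalizing u' with
  | nil a =>
    obtain ⟨p, q, x, y, hxy, hu, hu'⟩ := hs
    exact absurd hu.symm (by simp)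
  | one a l hl ih =>
    obtain ⟨p, q, x, y, hxy, hu, hu'⟩ := hs
    cases p with
    | nil =>
      simp only [List.nil_append, List.cons.injEq] at hu
      obtain ⟨rfl, rfl⟩ := hu
      simp only [List.nil_append] at hu'
      rcases fibW_head hl with hy | hy
      · subst hy
        have hq : FibW (a + 2) q := by
          have := fibW_tail hl
          simpa using this
        rw [hu']
        exact FibW.two a q hq
      · omega
    | cons z p' =>
      simp only [List.cons_append, List.cons.injEq] at hu hu'
      obtain ⟨rfl, hl'⟩ := hu
      subst hl'
      rw [hu']
      exact FibW.one a _ (ih ⟨p', q, x, y, hxy, rfl, rfl⟩)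
  | two a l hl ih =>
    obtain ⟨p, q, x, y, hxy, hu, hu'⟩ := hs
    cases p with
    | nil =>
      simp only [List.nil_append, List.cons.injEq] at hu
      obtain ⟨rfl, rfl, rfl⟩ := hu
      simp only [List.nil_append] at hu'
      rw [hu']
      exact FibW.one a _ (FibW.one (a + 1) _ hl)
    | cons z p' =>
      cases p' with
      | nil =>
        simp only [List.cons_append, List.nil_append, List.cons.injEq] at hu
        obtain ⟨rfl, rfl, hl'⟩ := hu
        rcases fibW_head (hl' ▸ hl) with hy | hy <;> omega
      | cons z' p'' =>
        simp only [List.cons_append, List.cons.injEq] at hu hu'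
        obtain ⟨rfl, rfl, hl'⟩ := hu
        subst hl'
        rw [hu']
        exact FibW.two a _ (ih ⟨p'', q, x, y, hxy, rfl, rfl⟩)

lemma eqv_fibW_iff {a : ℕ} {u u' : List ℕ} (h : Eqv u u') : (FibW a u ↔ FibW a u') := by
  induction h with
  | rel _ _ h => exact ⟨fun hf => fibW_swap hf h, fun hf => fibW_swap hf (adjswap1_symm h)⟩
  | refl => exact Iff.rfl
  | symm _ _ _ ih => exact ih.symm
  | trans _ _ _ _ _ ih1 ih2 => exact ih1.trans ih2

lemma class_run_eq (a m : ℕ) :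
    {u : List ℕ | Eqv (List.range' a m) u} = {u : List ℕ | FibW a u ∧ u.length = m} := by
  ext u
  simp only [Set.mem_setOf_eq]
  constructor
  · intro h
    refine ⟨(eqv_fibW_iff h).1 (fibW_run m a), ?_⟩
    have := eqv_length h
    simpa using this.symm
  · rintro ⟨hf, rfl⟩
    exact fibW_eqv_run hf

/-- All fib-words of given starting value and length. -/
def fibWords : ℕ → ℕ → List (List ℕ)
  | _, 0 => [[]]
  | a, 1 => [[a]]
  | a, (m+2) => ((fibWords (a+1) (m+1)).map (a :: ·)) ++
      ((fibWords (a+2) m).map (fun l => (a+1) :: a :: l))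

lemma length_fibWords (a m : ℕ) : (fibWords a m).length = Nat.fib (m + 1) := by
  match m with
  | 0 => simp [fibWords]
  | 1 => simp [fibWords]
  | (n+2) =>
    have h1 := length_fibWords (a+1) (n+1)
    have h2 := length_fibWords (a+2) n
    simp only [fibWords, List.length_append, List.length_map, h1, h2]
    have h3 : Nat.fib (n + 1 + 2) = Nat.fib (n + 1) + Nat.fib (n + 1 + 1) := Nat.fib_add_two
    have h4 : n + 2 + 1 = n + 1 + 2 := by omega
    rw [h4, h3]
    omega

lemma mem_fibWords (a m : ℕ) (u : List ℕ) :
    u ∈ fibWords a m ↔ FibW a u ∧ u.length = m := by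
  match m with
  | 0 =>
    simp only [fibWords, List.mem_singleton, List.length_eq_zero_iff]
    constructor
    · rintro rfl; exact ⟨FibW.nil a, rfl⟩
    · rintro ⟨_, rfl⟩; rfl
  | 1 =>
    simp only [fibWords, List.mem_singleton]
    constructor
    · rintro rfl; exact ⟨FibW.one a [] (FibW.nil _), rfl⟩
    · rintro ⟨hf, hl⟩
      cases hf with
      | nil => simp at hl
      | one _ l hl' =>
        simp only [List.length_cons] at hl
        have hln : l = [] := List.length_eq_zero_iff.mp (by omega)
        simp [hln]
      | two _ l _ => simp at hl
  | (n+2) =>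
    have h1 := mem_fibWords (a+1) (n+1)
    have h2 := mem_fibWords (a+2) n
    simp only [fibWords, List.mem_append, List.mem_map, h1, h2]
    constructor
    · rintro (⟨l, ⟨hf, hl⟩, rfl⟩ | ⟨l, ⟨hf, hl⟩, rfl⟩)
      · exact ⟨FibW.one a l hf, by simp [hl]⟩
      · exact ⟨FibW.two a l hf, by simp [hl]⟩
    · rintro ⟨hf, hl⟩
      cases hf with
      | nil => simp at hl
      | one _ l hf' =>
        exact Or.inl ⟨l, ⟨hf', by simpa using hl⟩, rfl⟩
      | two _ l hf' =>
        exact Or.inr ⟨l, ⟨hf', by simp at hl; omega⟩, rfl⟩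

lemma nodup_fibWords (a m : ℕ) : (fibWords a m).Nodup := by
  match m with
  | 0 => simp [fibWords]
  | 1 => simp [fibWords]
  | (n+2) =>
    have h1 := nodup_fibWords (a+1) (n+1)
    have h2 := nodup_fibWords (a+2) n
    rw [fibWords]
    refine List.Nodup.append ?_ ?_ ?_
    · exact h1.map (fun x y h => by simpa using h)
    · exact h2.map (fun x y h => by simpa using h)
    · intro x hx hy
      simp only [List.mem_map] at hx hy
      obtain ⟨l, _, rfl⟩ := hx
      obtain ⟨l', _, h⟩ := hy
      have : a = a + 1 := by
        have := congrArg (fun t => t.headI) h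
        simp at this
      omega

lemma ncard_class_run (a m : ℕ) :
    Set.ncard {u : List ℕ | Eqv (List.range' a m) u} = Nat.fib (m + 1) := by
  rw [class_run_eq]
  have hset : {u : List ℕ | FibW a u ∧ u.length = m} = ↑(fibWords a m).toFinset := by
    ext u
    simp [mem_fibWords]
  rw [hset, Set.ncard_coe_finset, List.toFinset_card_of_nodup (nodup_fibWords a m),
    length_fibWords]

lemma adjswap1_reverse {u v : List ℕ} (h : AdjSwap1 u v) :
    AdjSwap1 u.reverse v.reverse := by
  obtain ⟨p, q, x, y, hxy, hu, hv⟩ := h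
  refine ⟨q.reverse, p.reverse, y, x, by omega, ?_, ?_⟩
  · rw [hu]; simp
  · rw [hv]; simp

lemma eqv_reverse {u v : List ℕ} (h : Eqv u v) : Eqv u.reverse v.reverse := by
  induction h with
  | rel _ _ h => exact EqvGen.rel _ _ (adjswap1_reverse h)
  | refl => exact EqvGen.refl _
  | symm _ _ _ ih => exact EqvGen.symm _ _ ih
  | trans _ _ _ _ _ ih1 ih2 => exact EqvGen.trans _ _ _ ih1 ih2

lemma class_reverse (b : List ℕ) :
    {u : List ℕ | Eqv b u} = List.reverse '' {u : List ℕ | Eqv b.reverse u} := by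
  ext u
  simp only [Set.mem_setOf_eq, Set.mem_image]
  constructor
  · intro h
    exact ⟨u.reverse, eqv_reverse h, by simp⟩
  · rintro ⟨u', h, rfl⟩
    have := eqv_reverse h
    simpa using this

lemma chain_inc_eq_range' (l : List ℕ) (h : l.Chain' (fun a b => b = a + 1)) :
    ∀ a : ℕ, l.head? = some a → l = List.range' a l.length := by
  induction l with
  | nil => intro a ha; simp at ha
  | cons x t ih =>
    intro a ha
    simp only [List.head?_cons, Option.some.injEq] at ha
    subst ha
    cases t with
    | nil => simp [List.range'_succ]
    | cons y t' =>
      simp only [List.Chain', List.isChain_cons_cons] at h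
      obtain ⟨hy, ht⟩ := h
      have := ih ht (x + 1) (by simp [hy])
      rw [List.length_cons, List.range'_succ, ← this]

lemma ncard_class_block (b : List ℕ) (hb : ConsecRun b) :
    Set.ncard {u : List ℕ | Eqv b u} = Nat.fib (b.length + 1) := by
  obtain ⟨hne, hch | hch⟩ := hb
  · obtain ⟨a, ha⟩ : ∃ a, b.head? = some a := by
      cases b with
      | nil => exact absurd rfl hne
      | cons x t => exact ⟨x, rfl⟩
    rw [chain_inc_eq_range' b hch a ha]
    simpa using ncard_class_run a b.length
  · have hch' : b.reverse.Chain' (fun a b => b = a + 1) := by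
      simp only [List.Chain', List.isChain_reverse]
      exact hch
    obtain ⟨a, ha⟩ : ∃ a, b.reverse.head? = some a := by
      cases hb : b.reverse with
      | nil => exact absurd (by simpa using hb) hne
      | cons x t => exact ⟨x, rfl⟩
    rw [class_reverse b,
      Set.ncard_image_of_injective _ List.reverse_injective,
      chain_inc_eq_range' b.reverse hch' a ha]
    have := ncard_class_run a b.reverse.length
    simpa using this

/-- The set of concatenations of representatives of the block classes. -/
def Sset (v : List (List ℕ)) : Set (List ℕ) :=
  {u | ∃ L : List (List ℕ), List.Forall₂ (Relation.EqvGen AdjSwap1) v L ∧ u = L.flatten}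

lemma Sset_nil : Sset [] = {[]} := by
  ext u
  simp [Sset, List.forall₂_nil_left_iff]

lemma Sset_cons (b : List ℕ) (v : List (List ℕ)) :
    Sset (b :: v) =
      (fun p : List ℕ × List ℕ => p.1 ++ p.2) '' ({x | Eqv b x} ×ˢ Sset v) := by
  ext u
  simp only [Sset, Set.mem_setOf_eq, Set.mem_image, Set.mem_prod, Prod.exists]
  constructor
  · rintro ⟨L, hL, rfl⟩
    rw [List.forall₂_cons_left_iff] at hL
    obtain ⟨x, L', hx, hL', rfl⟩ := hL
    exact ⟨x, L'.flatten, ⟨hx, L', hL', rfl⟩, by simp⟩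
  · rintro ⟨x, y, ⟨hx, L', hL', rfl⟩, rfl⟩
    exact ⟨x :: L', List.Forall₂.cons hx hL', by simp⟩

lemma ncard_Sset (v : List (List ℕ)) (h : ∀ b ∈ v, ConsecRun b) :
    (Sset v).ncard = (v.map fun b => Nat.fib (b.length + 1)).prod := by
  induction v with
  | nil => simp [Sset_nil]
  | cons b v ih =>
    rw [Sset_cons]
    have hinj : Set.InjOn (fun p : List ℕ × List ℕ => p.1 ++ p.2)
        ({x | Eqv b x} ×ˢ Sset v) := by
      rintro ⟨x, y⟩ ⟨hx, hy⟩ ⟨x', y'⟩ ⟨hx', hy'⟩ hxy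
      simp only [Set.mem_setOf_eq] at hx hx'
      have hl : x.length = x'.length := by
        rw [← eqv_length hx, ← eqv_length hx']
      obtain ⟨h1, h2⟩ := List.append_inj hxy hl
      exact Prod.ext h1 h2
    rw [Set.ncard_image_of_injOn hinj]
    have hprod : ({x | Eqv b x} ×ˢ Sset v).ncard =
        {x : List ℕ | Eqv b x}.ncard * (Sset v).ncard := by
      rw [← Nat.card_coe_set_eq, ← Nat.card_coe_set_eq, ← Nat.card_coe_set_eq,
        Nat.card_congr (Equiv.Set.prod _ _), Nat.card_prod]
    rw [hprod, ncard_class_block b (h b (by simp)),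
      ih (fun b' hb' => h b' (by simp [hb']))]
    simp

/-- Let `w` be a permutation of a finite set of positive integers and let
`v = v₁ ⋯ vₖ` be the canonical block decomposition of its class `⟨w⟩`: each `vᵢ`
is an increasing or decreasing run of consecutive integers and every `u ∼ w`
decomposes into blocks equivalent to the `vᵢ`. If `mᵢ` is the length of `vᵢ`, then
`#⟨w⟩ = F_{m₁+1} F_{m₂+1} ⋯ F_{mₖ+1}`, a product of Fibonacci numbers. -/
theorem stmt10 (w : List ℕ) (hpos : ∀ x ∈ w, 0 < x) (hnd : w.Nodup)
    (v : List (List ℕ))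
    (hv : Relation.EqvGen AdjSwap1 w v.flatten)
    (hruns : ∀ b ∈ v, ConsecRun b)
    (hdec : Decomposes v w) :
    Set.ncard {u : List ℕ | Relation.EqvGen AdjSwap1 w u} =
      (v.map fun b => Nat.fib (b.length + 1)).prod := by
  have hset : {u : List ℕ | Relation.EqvGen AdjSwap1 w u} = Sset v := by
    ext u
    simp only [Set.mem_setOf_eq]
    constructor
    · intro h
      obtain ⟨v', hu, hlen, hidx⟩ := hdec u h
      refine ⟨v', ?_, hu⟩
      rw [List.forall₂_iff_get]
      exact ⟨hlen.symm, fun i h1 h2 => hidx i h1 h2⟩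
    · rintro ⟨L, hL, rfl⟩
      exact EqvGen.trans _ _ _ hv (eqv_flatten hL)
  rw [hset]
  exact ncard_Sset v hruns
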